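/- Let (X_k)_{k≥1} be a sequence of positive random variables such that A = lim_{n→∞} (1/n)Σ_{k=1}^n X_k and C = lim_{n→∞} (1/(2n))Σ_{k=1}^n X_k² exist almost surely and in expectation, with 0 < A < ∞ and C < ∞. Define Z_n = Σ_{k=1}^n X_k and the sawtooth age process Δ(t) = t − Z_{N(t)} where N(t) = max{n : Z_n ≤ t} (with Z_0 = 0). Then almost surely lim_{T→∞} (1/T)∫₀^T Δ(t) dt = C / A, i.e., the time-average age equals (lim (1/2n)ΣE[X_k²]) / (lim (1/n)ΣX_k). -/

import Mathlib

open Filter MeasureTheory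

section Det
variable (x : ℕ → ℝ)

noncomputable def Ssum (n : ℕ) : ℝ := ∑ k ∈ Finset.range n, x (k+1)
noncomputable def Qsum (n : ℕ) : ℝ := ∑ k ∈ Finset.range n, (x (k+1))^2
noncomputable def Nt (t : ℝ) : ℕ := sSup {n : ℕ | Ssum x n ≤ t}

variable (hx : ∀ k, 0 < x k)
include hx

lemma Ssum_zero : Ssum x 0 = 0 := by simp [Ssum]

lemma Ssum_succ (n : ℕ) : Ssum x (n+1) = Ssum x n + x (n+1) := by
  simp [Ssum, Finset.sum_range_succ]

lemma Ssum_strictMono : StrictMono (Ssum x) := by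
  apply strictMono_nat_of_lt_succ
  intro n
  rw [Ssum_succ x hx]
  linarith [hx (n+1)]

lemma Ssum_nonneg (n : ℕ) : 0 ≤ Ssum x n := by
  have := (Ssum_strictMono x hx).monotone (Nat.zero_le n)
  rwa [Ssum_zero x hx] at this
end Det

section Det2
variable (x : ℕ → ℝ) (hx : ∀ k, 0 < x k)
include hx

lemma bddN (htop : Tendsto (Ssum x) atTop atTop) (t : ℝ) :
    BddAbove {n : ℕ | Ssum x n ≤ t} := by
  obtain ⟨M, hM⟩ := eventually_atTop.1 (htop.eventually (eventually_ge_atTop (t+1)))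
  refine ⟨M, fun n hn => ?_⟩
  by_contra h
  push_neg at h
  have := hM n h.le
  simp only [Set.mem_setOf_eq] at hn
  linarith

lemma Ssum_Nt_le (htop : Tendsto (Ssum x) atTop atTop) {t : ℝ} (ht : 0 ≤ t) :
    Ssum x (Nt x t) ≤ t := by
  have hne : {n : ℕ | Ssum x n ≤ t}.Nonempty := ⟨0, by simpa [Ssum] using ht⟩
  exact Nat.sSup_mem hne (bddN x hx htop t)

lemma lt_Ssum_Nt_succ (htop : Tendsto (Ssum x) atTop atTop) (t : ℝ) :
    t < Ssum x (Nt x t + 1) := by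
  by_contra h
  push_neg at h
  have : Nt x t + 1 ≤ Nt x t := le_csSup (bddN x hx htop t) h
  omega

lemma Nt_eq {t : ℝ} {k : ℕ} (h1 : Ssum x k ≤ t) (h2 : t < Ssum x (k+1)) :
    Nt x t = k := by
  have hset : {n : ℕ | Ssum x n ≤ t} = Set.Iic k := by
    ext n
    simp only [Set.mem_setOf_eq, Set.mem_Iic]
    constructor
    · intro h
      by_contra hn
      push_neg at hn
      have : Ssum x (k+1) ≤ Ssum x n := (Ssum_strictMono x hx).monotone hn
      linarith
    · intro h
      exact le_trans ((Ssum_strictMono x hx).monotone h) h1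
  rw [Nt, hset, csSup_Iic]

lemma Nt_ge (htop : Tendsto (Ssum x) atTop atTop) {t : ℝ} {k : ℕ}
    (h1 : Ssum x k ≤ t) : k ≤ Nt x t := le_csSup (bddN x hx htop t) h1

lemma Nt_tendsto (htop : Tendsto (Ssum x) atTop atTop) :
    Tendsto (fun t : ℝ => Nt x t) atTop atTop := by
  rw [tendsto_atTop]
  intro k
  filter_upwards [eventually_ge_atTop (Ssum x k)] with t ht
  exact Nt_ge x hx htop ht
end Det2

section Det3
variable (x : ℕ → ℝ) (hx : ∀ k, 0 < x k)
include hx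

noncomputable def ageF (t : ℝ) : ℝ := t - Ssum x (Nt x t)

lemma ae_eq_piece {a b : ℝ} {m : ℕ} (hma : Ssum x m ≤ a) (hab : a ≤ b)
    (hbm : b ≤ Ssum x (m+1)) :
    ∀ᵐ t ∂(volume.restrict (Set.uIoc a b)), ageF x t = t - Ssum x m := by
  have h1 : ∀ᵐ t ∂(volume.restrict (Set.uIoc a b)), t ≠ Ssum x (m+1) := by
    apply ae_restrict_of_ae
    rw [ae_iff]
    have : {t : ℝ | ¬ t ≠ Ssum x (m+1)} = {Ssum x (m+1)} := by ext t; simp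
    rw [this]
    exact measure_singleton _
  filter_upwards [h1, ae_restrict_mem measurableSet_uIoc] with t ht1 ht2
  rw [Set.uIoc_of_le hab] at ht2
  have h3 : Ssum x m ≤ t := le_trans hma ht2.1.le
  have h4 : t < Ssum x (m+1) := lt_of_le_of_ne (le_trans ht2.2 hbm) ht1
  rw [ageF, Nt_eq x hx h3 h4]

lemma piece_integrable {a b : ℝ} {m : ℕ} (hma : Ssum x m ≤ a) (hab : a ≤ b)
    (hbm : b ≤ Ssum x (m+1)) : IntervalIntegrable (ageF x) volume a b := by
  have : IntervalIntegrable (fun t => t - Ssum x m) volume a b :=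
    intervalIntegral.intervalIntegrable_id.sub intervalIntegrable_const
  exact this.congr_ae (EventuallyEq.symm (ae_eq_piece x hx hma hab hbm))

lemma piece_integral {a b : ℝ} {m : ℕ} (hma : Ssum x m ≤ a) (hab : a ≤ b)
    (hbm : b ≤ Ssum x (m+1)) :
    ∫ t in a..b, ageF x t = (b-a)*((b+a)/2 - Ssum x m) := by
  have h1 : ∫ t in a..b, ageF x t = ∫ t in a..b, (t - Ssum x m) := by
    apply intervalIntegral.integral_congr_ae
    have := ae_eq_piece x hx hma hab hbm
    rw [MeasureTheory.ae_restrict_iff' measurableSet_uIoc] at this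
    exact this
  rw [h1, intervalIntegral.integral_sub intervalIntegral.intervalIntegrable_id
    intervalIntegrable_const, integral_id, intervalIntegral.integral_const, smul_eq_mul]
  ring
end Det3

section Det4
variable (x : ℕ → ℝ) (hx : ∀ k, 0 < x k)
include hx

lemma int_upto (m : ℕ) : IntervalIntegrable (ageF x) volume 0 (Ssum x m) ∧
    (∫ t in (0:ℝ)..(Ssum x m), ageF x t) = Qsum x m / 2 := by
  induction m with
  | zero => rw [Ssum_zero x hx]; simp [Qsum]
  | succ m ih =>
    have hstep : Ssum x m ≤ Ssum x (m+1) := ((Ssum_strictMono x hx) (Nat.lt_succ_self m)).le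
    have hint2 : IntervalIntegrable (ageF x) volume (Ssum x m) (Ssum x (m+1)) :=
      piece_integrable x hx le_rfl hstep le_rfl
    have hval2 : ∫ t in (Ssum x m)..(Ssum x (m+1)), ageF x t = (x (m+1))^2 / 2 := by
      rw [piece_integral x hx le_rfl hstep le_rfl, Ssum_succ x hx]
      ring
    constructor
    · exact ih.1.trans hint2
    · rw [← intervalIntegral.integral_add_adjacent_intervals ih.1 hint2, ih.2, hval2]
      simp only [Qsum, Finset.sum_range_succ]
      ring

lemma int_formula (htop : Tendsto (Ssum x) atTop atTop) {T : ℝ} (hT : 0 ≤ T) :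
    (∫ t in (0:ℝ)..T, ageF x t)
      = Qsum x (Nt x T) / 2 + (T - Ssum x (Nt x T))^2 / 2 := by
  set m := Nt x T with hm
  have h1 : Ssum x m ≤ T := Ssum_Nt_le x hx htop hT
  have h2 : T ≤ Ssum x (m+1) := (lt_Ssum_Nt_succ x hx htop T).le
  have hint2 : IntervalIntegrable (ageF x) volume (Ssum x m) T :=
    piece_integrable x hx le_rfl h1 h2
  have hval2 : ∫ t in (Ssum x m)..T, ageF x t = (T - Ssum x m)^2 / 2 := by
    rw [piece_integral x hx le_rfl h1 h2]; ring
  rw [← intervalIntegral.integral_add_adjacent_intervals (int_upto x hx m).1 hint2,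
    (int_upto x hx m).2, hval2]
end Det4

section Det5
variable (x : ℕ → ℝ) (hx : ∀ k, 0 < x k)
include hx

lemma main_det {A C : ℝ} (hA : 0 < A)
    (hAl : Tendsto (fun n : ℕ => (1 / (n:ℝ)) * Ssum x n) atTop (nhds A))
    (hCl : Tendsto (fun n : ℕ => (1 / (2*(n:ℝ))) * Qsum x n) atTop (nhds C)) :
    Tendsto (fun T : ℝ => (1/T) * ∫ t in (0:ℝ)..T, ageF x t) atTop (nhds (C/A)) := by
  -- S tends to infinity
  have htop : Tendsto (Ssum x) atTop atTop := by
    have h1 : Tendsto (fun n : ℕ => (n:ℝ) * ((1/(n:ℝ)) * Ssum x n)) atTop atTop :=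
      tendsto_natCast_atTop_atTop.atTop_mul_pos hA hAl
    apply h1.congr'
    filter_upwards [eventually_ge_atTop 1] with n hn
    have : (n:ℝ) ≠ 0 := Nat.cast_ne_zero.2 (by omega)
    field_simp
  have hratio : Tendsto (fun n : ℕ => ((n:ℝ)+1)/n) atTop (nhds 1) := by
    have := tendsto_one_div_atTop_nhds_zero_nat (𝕜 := ℝ)
    have h2 : Tendsto (fun n : ℕ => 1 + 1/(n:ℝ)) atTop (nhds (1+0)) :=
      tendsto_const_nhds.add this
    rw [add_zero] at h2
    apply h2.congr'
    filter_upwards [eventually_ge_atTop 1] with n hn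
    have : (n:ℝ) ≠ 0 := Nat.cast_ne_zero.2 (by omega)
    field_simp
  have hS1 : Tendsto (fun n : ℕ => (1/(n:ℝ)) * Ssum x (n+1)) atTop (nhds A) := by
    have h1 : Tendsto (fun n : ℕ => (((n:ℝ)+1)/n) * ((1/((n:ℝ)+1)) * Ssum x (n+1)))
        atTop (nhds (1 * A)) := by
      apply hratio.mul
      have := hAl.comp (tendsto_add_atTop_nat 1)
      apply this.congr
      intro n; simp [Function.comp]
    rw [one_mul] at h1
    apply h1.congr'
    filter_upwards [eventually_ge_atTop 1] with n hn
    have hn0 : (n:ℝ) ≠ 0 := Nat.cast_ne_zero.2 (by omega)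
    have hn1 : (n:ℝ) + 1 ≠ 0 := by positivity
    field_simp
  have hQ1 : Tendsto (fun n : ℕ => (1/(2*(n:ℝ))) * Qsum x (n+1)) atTop (nhds C) := by
    have h1 : Tendsto (fun n : ℕ => (((n:ℝ)+1)/n) * ((1/(2*((n:ℝ)+1))) * Qsum x (n+1)))
        atTop (nhds (1 * C)) := by
      apply hratio.mul
      have := hCl.comp (tendsto_add_atTop_nat 1)
      apply this.congr
      intro n; simp [Function.comp]
    rw [one_mul] at h1
    apply h1.congr'
    filter_upwards [eventually_ge_atTop 1] with n hn
    have hn0 : (n:ℝ) ≠ 0 := Nat.cast_ne_zero.2 (by omega)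
    have hn1 : (n:ℝ) + 1 ≠ 0 := by positivity
    field_simp
  -- bounding sequences
  set a : ℕ → ℝ := fun n => Qsum x n / (2 * Ssum x (n+1)) with ha_def
  set b : ℕ → ℝ := fun n => Qsum x (n+1) / (2 * Ssum x n) with hb_def
  have hSpos : ∀ n : ℕ, 1 ≤ n → 0 < Ssum x n := by
    intro n hn
    calc (0:ℝ) = Ssum x 0 := (Ssum_zero x hx).symm
    _ < Ssum x n := (Ssum_strictMono x hx) (by omega)
  have ha : Tendsto a atTop (nhds (C/A)) := by
    have h1 := hCl.div hS1 (ne_of_gt hA)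
    apply h1.congr'
    filter_upwards [eventually_ge_atTop 1] with n hn
    have hn0 : (n:ℝ) ≠ 0 := Nat.cast_ne_zero.2 (by omega)
    have hs : Ssum x (n+1) ≠ 0 := ne_of_gt (hSpos (n+1) (by omega))
    simp only [ha_def, Pi.div_apply]
    field_simp
  have hb : Tendsto b atTop (nhds (C/A)) := by
    have h1 := hQ1.div hAl (ne_of_gt hA)
    apply h1.congr'
    filter_upwards [eventually_ge_atTop 1] with n hn
    have hn0 : (n:ℝ) ≠ 0 := Nat.cast_ne_zero.2 (by omega)
    have hs : Ssum x n ≠ 0 := ne_of_gt (hSpos n hn)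
    simp only [hb_def, Pi.div_apply]
    field_simp
  have hN := Nt_tendsto x hx htop
  have hS1pos : 0 < Ssum x 1 := hSpos 1 le_rfl
  -- squeeze
  have hQnonneg : ∀ n, 0 ≤ Qsum x n := fun n =>
    Finset.sum_nonneg (fun k _ => sq_nonneg _)
  apply tendsto_of_tendsto_of_tendsto_of_le_of_le' (ha.comp hN) (hb.comp hN)
  · filter_upwards [eventually_ge_atTop (Ssum x 1)] with T hT
    have hT0 : (0:ℝ) ≤ T := le_trans hS1pos.le hT
    set m := Nt x T with hm
    have hm1 : 1 ≤ m := Nt_ge x hx htop hT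
    have h1 : Ssum x m ≤ T := Ssum_Nt_le x hx htop hT0
    have h2 : T < Ssum x (m+1) := lt_Ssum_Nt_succ x hx htop T
    have hTpos : 0 < T := lt_of_lt_of_le hS1pos hT
    rw [int_formula x hx htop hT0, ← hm]
    have key : Qsum x m / (2 * Ssum x (m+1)) ≤ Qsum x m / (2 * T) := by
      gcongr
      exact hQnonneg m
    calc a m ≤ Qsum x m / (2 * T) := key
    _ = (1/T) * (Qsum x m / 2) := by ring
    _ ≤ (1/T) * (Qsum x m / 2 + (T - Ssum x m)^2 / 2) := by
      apply mul_le_mul_of_nonneg_left _ (by positivity)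
      linarith [sq_nonneg (T - Ssum x m)]
  · filter_upwards [eventually_ge_atTop (Ssum x 1)] with T hT
    have hT0 : (0:ℝ) ≤ T := le_trans hS1pos.le hT
    set m := Nt x T with hm
    have hm1 : 1 ≤ m := Nt_ge x hx htop hT
    have h1 : Ssum x m ≤ T := Ssum_Nt_le x hx htop hT0
    have h2 : T < Ssum x (m+1) := lt_Ssum_Nt_succ x hx htop T
    have hTpos : 0 < T := lt_of_lt_of_le hS1pos hT
    have hSm : 0 < Ssum x m := hSpos m hm1
    rw [int_formula x hx htop hT0, ← hm]
    have hsq : (T - Ssum x m)^2 ≤ (x (m+1))^2 := by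
      apply pow_le_pow_left₀ (by linarith)
      have := Ssum_succ x hx m
      linarith
    have hQm1 : Qsum x (m+1) = Qsum x m + (x (m+1))^2 := by
      simp [Qsum, Finset.sum_range_succ]
    have : (1/T) * (Qsum x m / 2 + (T - Ssum x m)^2 / 2)
        ≤ (Qsum x m + (x (m+1))^2) / (2 * Ssum x m) := by
      rw [one_div_mul_eq_div, div_le_div_iff₀ (by positivity) (by positivity)]
      nlinarith [hQnonneg m, sq_nonneg (x (m+1))]
    calc (1/T) * (Qsum x m / 2 + (T - Ssum x m)^2 / 2)
        ≤ (Qsum x m + (x (m+1))^2) / (2 * Ssum x m) := this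
    _ = b m := by rw [hb_def]; simp [hQm1]
end Det5

/-- generalized renewal-reward for the sawtooth age process: if the
positive inter-update times `X_k` satisfy, almost surely,
`(1/n) Σ_{k=1}^n X_k → A ∈ (0,∞)` and `(1/(2n)) Σ_{k=1}^n X_k² → C < ∞`, then the
time-average of the age `Δ(t) = t − Z_{N(t)}` (with `Z_n = Σ_{k=1}^n X_k` and
`N(t) = max{n : Z_n ≤ t}`) converges almost surely to `C / A`. -/
theorem stmt_12 {Ω : Type*} [MeasurableSpace Ω] (μ : Measure Ω)
    [IsProbabilityMeasure μ] (X : ℕ → Ω → ℝ)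
    (hpos : ∀ k ω, 0 < X k ω)
    (Z : ℕ → Ω → ℝ)
    (hZ : ∀ n ω, Z n ω = ∑ k ∈ Finset.range n, X (k + 1) ω)
    (A C : ℝ) (hA : 0 < A)
    (hA_lim : ∀ᵐ ω ∂μ, Tendsto
      (fun n : ℕ => (1 / (n : ℝ)) * ∑ k ∈ Finset.range n, X (k + 1) ω)
      atTop (nhds A))
    (hC_lim : ∀ᵐ ω ∂μ, Tendsto
      (fun n : ℕ => (1 / (2 * (n : ℝ))) * ∑ k ∈ Finset.range n, (X (k + 1) ω) ^ 2)
      atTop (nhds C)) :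
    ∀ᵐ ω ∂μ, Tendsto
      (fun T : ℝ => (1 / T) *
        ∫ t in (0:ℝ)..T, (t - Z (sSup {n : ℕ | Z n ω ≤ t}) ω))
      atTop (nhds (C / A)) := by
  filter_upwards [hA_lim, hC_lim] with ω h1 h2
  set x : ℕ → ℝ := fun k => X k ω with hxdef
  have hxp : ∀ k, 0 < x k := fun k => hpos k ω
  have hmain := main_det x hxp hA h1 h2
  have heq : ∀ t : ℝ, (t - Z (sSup {n : ℕ | Z n ω ≤ t}) ω) = ageF x t := by
    intro t
    have hset : {n : ℕ | Z n ω ≤ t} = {n : ℕ | Ssum x n ≤ t} := by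
      ext n; simp [hZ, Ssum, hxdef]
    rw [ageF, Nt, ← hset, hZ]; rfl
  simp only [heq]
  exact hmain
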